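/- Let K be a compact metric space and f : K → K continuous. Suppose g^(k) = {g_m^(k) : m ∈ ℤ≥0} is a sequence of methods such that dist_{C⁰}(g_m^(k), f) → 0 as k → ∞ uniformly in m. If μ_k ∈ M(g^(k)) for each k and μ_k converges weakly-* to a measure μ*, then μ* is f-invariant. -/

import Mathlib

open MeasureTheory Filter Topology
open scoped NNReal ENNReal BoundedContinuousFunction

/-- The trajectory of a method `g = {g_k}`: `methodOrbit g x k = g_0^k(x)` where
`g_0^k = g_{k-1} ∘ ⋯ ∘ g_0` and `g_0^0 = id`. -/
def methodOrbit {K : Type*} (g : ℕ → K → K) (x : K) : ℕ → K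
  | 0 => x
  | n + 1 => g n (methodOrbit g x n)

/-- The empirical measure `μ_N = (1/N) ∑_{k<N} δ(g_0^k(x))` for `N = n+1`, as a finite
Borel measure (it is in fact a probability measure). -/
noncomputable def empiricalFM {K : Type*} [MetricSpace K] [MeasurableSpace K]
    (g : ℕ → K → K) (x : K) (n : ℕ) : MeasureTheory.FiniteMeasure K :=
  ⟨((n + 1 : ℝ≥0))⁻¹ • ∑ k ∈ Finset.range (n + 1),
      MeasureTheory.Measure.dirac (methodOrbit g x k), by infer_instance⟩

/-- `M₀(g,x)`: the set of weak-* limit points of the empirical measures along the trajectory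
of the method `g` starting at `x`; it equals `⋂_{n≥1} closure {μ_N : N ≥ n}`. -/
noncomputable def M0 {K : Type*} [MetricSpace K] [MeasurableSpace K] [OpensMeasurableSpace K]
    (g : ℕ → K → K) (x : K) : Set (MeasureTheory.FiniteMeasure K) :=
  ⋂ n : ℕ, closure (empiricalFM g x '' Set.Ici n)

/-- `M(g)`: the set of invariant measures of the method `g`, i.e. the closed convex hull
(in the weak-* topology) of `⋃_{x ∈ K} M₀(g,x)`. -/
noncomputable def Mset {K : Type*} [MetricSpace K] [MeasurableSpace K] [OpensMeasurableSpace K]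
    (g : ℕ → K → K) : Set (MeasureTheory.FiniteMeasure K) :=
  closure (convexHull ℝ≥0 (⋃ x : K, M0 g x))

/-- The defect functional `ν ↦ ∫ φ∘f dν − ∫ φ dν`. -/
noncomputable def Lam {K : Type*} [MetricSpace K] [MeasurableSpace K]
    (f : K → K) (φ : K →ᵇ ℝ) (ν : MeasureTheory.FiniteMeasure K) : ℝ :=
  (∫ x, φ (f x) ∂(ν : Measure K)) - ∫ x, φ x ∂(ν : Measure K)

lemma lam_continuous {K : Type*} [MetricSpace K] [MeasurableSpace K] [OpensMeasurableSpace K]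
    (f : K → K) (hf : Continuous f) (φ : K →ᵇ ℝ) : Continuous (Lam f φ) := by
  have h1 := MeasureTheory.FiniteMeasure.continuous_integral_boundedContinuousFunction
      (φ.compContinuous ⟨f, hf⟩)
  have h2 := MeasureTheory.FiniteMeasure.continuous_integral_boundedContinuousFunction
      (X := K) φ
  exact h1.sub h2

lemma integral_empiricalFM {K : Type*} [MetricSpace K] [MeasurableSpace K] [BorelSpace K]
    (g : ℕ → K → K) (x : K) (n : ℕ) (ψ : K →ᵇ ℝ) :
    ∫ y, ψ y ∂(empiricalFM g x n : Measure K)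
      = ((n : ℝ) + 1)⁻¹ * ∑ k ∈ Finset.range (n + 1), ψ (methodOrbit g x k) := by
  have hcoe : (empiricalFM g x n : Measure K)
      = ((n + 1 : ℝ≥0))⁻¹ • ∑ k ∈ Finset.range (n + 1),
          Measure.dirac (methodOrbit g x k) := rfl
  rw [hcoe, integral_smul_nnreal_measure,
    integral_finset_sum_measure (fun k _ => ψ.integrable _)]
  simp only [integral_dirac, NNReal.smul_def, smul_eq_mul]
  push_cast
  ring

lemma lam_empirical_bound {K : Type*} [MetricSpace K] [MeasurableSpace K] [BorelSpace K]
    (f : K → K) (hf : Continuous f) (φ : K →ᵇ ℝ) (g : ℕ → K → K) (ε' : ℝ)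
    (h : ∀ m y, |φ (f y) - φ (g m y)| ≤ ε') (x : K) (n : ℕ) :
    |Lam f φ (empiricalFM g x n)| ≤ ε' + 2 * ‖φ‖ / ((n : ℝ) + 1) := by
  set xo : ℕ → K := methodOrbit g x with hxo
  have n1pos : (0:ℝ) < (n:ℝ) + 1 := by positivity
  have e1 : ∫ y, φ (f y) ∂(empiricalFM g x n : Measure K)
      = ((n : ℝ) + 1)⁻¹ * ∑ k ∈ Finset.range (n + 1), φ (f (xo k)) := by
    simpa using integral_empiricalFM g x n (φ.compContinuous ⟨f, hf⟩)
  have e2 := integral_empiricalFM g x n φ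
  have key : Lam f φ (empiricalFM g x n)
      = ((n : ℝ) + 1)⁻¹ * ∑ k ∈ Finset.range (n + 1), (φ (f (xo k)) - φ (xo k)) := by
    rw [Lam, e1, e2, Finset.sum_sub_distrib, mul_sub]
  have hsplit : (∑ k ∈ Finset.range (n + 1), (φ (f (xo k)) - φ (xo k)))
      = (∑ k ∈ Finset.range (n + 1), (φ (f (xo k)) - φ (xo (k + 1))))
        + (∑ k ∈ Finset.range (n + 1), (φ (xo (k + 1)) - φ (xo k))) := by
    rw [← Finset.sum_add_distrib]
    exact Finset.sum_congr rfl fun k _ => by ring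
  have htel : (∑ k ∈ Finset.range (n + 1), (φ (xo (k + 1)) - φ (xo k)))
      = φ (xo (n + 1)) - φ (xo 0) :=
    Finset.sum_range_sub (fun k => φ (xo k)) (n + 1)
  have hb1 : |∑ k ∈ Finset.range (n + 1), (φ (f (xo k)) - φ (xo (k + 1)))|
      ≤ ((n : ℝ) + 1) * ε' := by
    calc |∑ k ∈ Finset.range (n + 1), (φ (f (xo k)) - φ (xo (k + 1)))|
        ≤ ∑ k ∈ Finset.range (n + 1), |φ (f (xo k)) - φ (xo (k + 1))| :=
          Finset.abs_sum_le_sum_abs _ _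
      _ ≤ ∑ _k ∈ Finset.range (n + 1), ε' :=
          Finset.sum_le_sum (fun k _ => by
            have : xo (k + 1) = g k (xo k) := rfl
            rw [this]; exact h k (xo k))
      _ = ((n : ℝ) + 1) * ε' := by
          rw [Finset.sum_const, Finset.card_range]; push_cast; ring
  have hb2 : |φ (xo (n + 1)) - φ (xo 0)| ≤ 2 * ‖φ‖ := by
    calc |φ (xo (n + 1)) - φ (xo 0)| ≤ |φ (xo (n + 1))| + |φ (xo 0)| := abs_sub _ _
      _ ≤ ‖φ‖ + ‖φ‖ := add_le_add (φ.norm_coe_le_norm _) (φ.norm_coe_le_norm _)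
      _ = 2 * ‖φ‖ := by ring
  have hsum : |∑ k ∈ Finset.range (n + 1), (φ (f (xo k)) - φ (xo k))|
      ≤ ((n : ℝ) + 1) * ε' + 2 * ‖φ‖ := by
    rw [hsplit]
    calc |_ + _| ≤ _ + |∑ k ∈ Finset.range (n + 1), (φ (xo (k + 1)) - φ (xo k))| :=
          abs_add_le _ _
      _ ≤ ((n : ℝ) + 1) * ε' + 2 * ‖φ‖ := by
          rw [htel]; exact add_le_add hb1 hb2
  rw [key, abs_mul, abs_of_nonneg (le_of_lt (inv_pos.mpr n1pos))]
  calc ((n : ℝ) + 1)⁻¹ * |∑ k ∈ Finset.range (n + 1), (φ (f (xo k)) - φ (xo k))|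
      ≤ ((n : ℝ) + 1)⁻¹ * (((n : ℝ) + 1) * ε' + 2 * ‖φ‖) := by
        exact mul_le_mul_of_nonneg_left hsum (le_of_lt (inv_pos.mpr n1pos))
    _ = ε' + 2 * ‖φ‖ / ((n : ℝ) + 1) := by
        field_simp

lemma lam_convex_combo {K : Type*} [MetricSpace K] [MeasurableSpace K] [OpensMeasurableSpace K]
    (f : K → K) (hf : Continuous f) (φ : K →ᵇ ℝ) (a b : ℝ≥0)
    (μ1 μ2 : MeasureTheory.FiniteMeasure K) :
    Lam f φ (a • μ1 + b • μ2) = (a : ℝ) * Lam f φ μ1 + (b : ℝ) * Lam f φ μ2 := by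
  have hint : ∀ ψ : K →ᵇ ℝ,
      ∫ x, ψ x ∂((a • μ1 + b • μ2 : MeasureTheory.FiniteMeasure K) : Measure K)
        = (a : ℝ) * (∫ x, ψ x ∂(μ1 : Measure K)) + (b : ℝ) * ∫ x, ψ x ∂(μ2 : Measure K) := by
    intro ψ
    rw [MeasureTheory.FiniteMeasure.toMeasure_add,
      integral_add_measure (ψ.integrable _) (ψ.integrable _),
      MeasureTheory.FiniteMeasure.toMeasure_smul, MeasureTheory.FiniteMeasure.toMeasure_smul,
      integral_smul_nnreal_measure, integral_smul_nnreal_measure, NNReal.smul_def,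
      NNReal.smul_def, smul_eq_mul, smul_eq_mul]
  have h1 := hint (φ.compContinuous ⟨f, hf⟩)
  have h2 := hint φ
  simp only [BoundedContinuousFunction.compContinuous_apply, ContinuousMap.coe_mk] at h1
  rw [Lam, h1, h2, Lam, Lam]
  ring

lemma lam_Mset_bound {K : Type*} [MetricSpace K] [MeasurableSpace K] [BorelSpace K]
    (f : K → K) (hf : Continuous f) (φ : K →ᵇ ℝ) (g : ℕ → K → K) (ε' : ℝ)
    (h : ∀ m y, |φ (f y) - φ (g m y)| ≤ ε')
    {ν : MeasureTheory.FiniteMeasure K} (hν : ν ∈ Mset g) : |Lam f φ ν| ≤ ε' := by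
  set S : Set (MeasureTheory.FiniteMeasure K) := {ρ | |Lam f φ ρ| ≤ ε'} with hS
  have habs : Continuous fun ρ : MeasureTheory.FiniteMeasure K => |Lam f φ ρ| :=
    (lam_continuous f hf φ).abs
  have hSclosed : IsClosed S := isClosed_le habs continuous_const
  have hSconv : Convex ℝ≥0 S := by
    intro μ1 h1 μ2 h2 a b _ _ hab
    have hab' : (a : ℝ) + (b : ℝ) = 1 := by exact_mod_cast congrArg NNReal.toReal hab
    simp only [hS, Set.mem_setOf_eq] at h1 h2 ⊢
    rw [lam_convex_combo f hf φ]
    calc |(a : ℝ) * Lam f φ μ1 + (b : ℝ) * Lam f φ μ2|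
        ≤ |(a : ℝ) * Lam f φ μ1| + |(b : ℝ) * Lam f φ μ2| := abs_add_le _ _
      _ = (a : ℝ) * |Lam f φ μ1| + (b : ℝ) * |Lam f φ μ2| := by
          rw [abs_mul, abs_mul, abs_of_nonneg a.coe_nonneg, abs_of_nonneg b.coe_nonneg]
      _ ≤ (a : ℝ) * ε' + (b : ℝ) * ε' :=
          add_le_add (mul_le_mul_of_nonneg_left h1 a.coe_nonneg)
            (mul_le_mul_of_nonneg_left h2 b.coe_nonneg)
      _ = ε' := by rw [← add_mul, hab', one_mul]
  have hsub : (⋃ x : K, M0 g x) ⊆ S := by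
    rintro ν0 hν0
    simp only [Set.mem_iUnion] at hν0
    obtain ⟨x, hx⟩ := hν0
    have hbn : ∀ n : ℕ, |Lam f φ ν0| ≤ ε' + 2 * ‖φ‖ / ((n : ℝ) + 1) := by
      intro n
      have hmem : ν0 ∈ closure (empiricalFM g x '' Set.Ici n) := Set.mem_iInter.mp hx n
      have himg : empiricalFM g x '' Set.Ici n
          ⊆ {ρ : MeasureTheory.FiniteMeasure K | |Lam f φ ρ| ≤ ε' + 2 * ‖φ‖ / ((n : ℝ) + 1)} := by
        rintro _ ⟨m, hm, rfl⟩
        have hb := lam_empirical_bound f hf φ g ε' h x m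
        have hmono : 2 * ‖φ‖ / ((m : ℝ) + 1) ≤ 2 * ‖φ‖ / ((n : ℝ) + 1) := by
          apply div_le_div_of_nonneg_left (by positivity) (by positivity)
          have : (n : ℝ) ≤ (m : ℝ) := by exact_mod_cast hm
          linarith
        exact hb.trans (by linarith)
      exact closure_minimal himg (isClosed_le habs continuous_const) hmem
    have htend : Tendsto (fun n : ℕ => ε' + 2 * ‖φ‖ / ((n : ℝ) + 1)) atTop (𝓝 ε') := by
      have h0 : Tendsto (fun n : ℕ => 2 * ‖φ‖ / ((n : ℝ) + 1)) atTop (𝓝 0) := by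
        have := tendsto_one_div_add_atTop_nhds_zero_nat.const_mul (2 * ‖φ‖)
        simpa [div_eq_mul_inv, one_div, mul_assoc] using this
      simpa using tendsto_const_nhds.add h0
    exact ge_of_tendsto' htend hbn
  exact closure_minimal (convexHull_min hsub hSconv) hSclosed hν

/-- Let `g⁽ᵏ⁾` be a sequence of methods on a compact metric space `K`
converging to a continuous map `f` uniformly in the index `m` of the method. If `μ_k` is an
invariant measure of the method `g⁽ᵏ⁾` for each `k` and `μ_k → μ*` weakly-*, then `μ*` is
`f`-invariant. -/
theorem stmt7 {K : Type*} [MetricSpace K] [CompactSpace K] [MeasurableSpace K] [BorelSpace K]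
    (f : K → K) (hf : Continuous f)
    (g : ℕ → ℕ → K → K) (hgc : ∀ k m, Continuous (g k m))
    (hconv : ∀ ε > (0 : ℝ), ∃ N : ℕ, ∀ k ≥ N, ∀ m : ℕ, ∀ y : K, dist (g k m y) (f y) ≤ ε)
    (μ : ℕ → FiniteMeasure K) (hμ : ∀ k, μ k ∈ Mset (g k))
    (μstar : FiniteMeasure K) (hlim : Tendsto μ atTop (𝓝 μstar)) :
    (μstar : Measure K).map f = (μstar : Measure K) := by
  have main : ∀ φ : K →ᵇ ℝ, Lam f φ μstar = 0 := by
    intro φ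
    have hcont : Tendsto (fun k => Lam f φ (μ k)) atTop (𝓝 (Lam f φ μstar)) :=
      ((lam_continuous f hf φ).tendsto μstar).comp hlim
    have hzero : Tendsto (fun k => Lam f φ (μ k)) atTop (𝓝 0) := by
      rw [Metric.tendsto_atTop]
      intro ε hε
      have hε2 : (0:ℝ) < ε / 2 := by positivity
      obtain ⟨δ, hδpos, hδ⟩ := Metric.uniformContinuous_iff.mp
        (CompactSpace.uniformContinuous_of_continuous φ.continuous) (ε / 2) hε2
      obtain ⟨N, hN⟩ := hconv (δ / 2) (half_pos hδpos)
      refine ⟨N, fun k hk => ?_⟩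
      have hb : |Lam f φ (μ k)| ≤ ε / 2 := by
        apply lam_Mset_bound f hf φ (g k) (ε / 2) ?_ (hμ k)
        intro m y
        have hd : dist (f y) (g k m y) < δ := by
          rw [dist_comm]
          calc dist (g k m y) (f y) ≤ δ / 2 := hN k hk m y
            _ < δ := half_lt_self hδpos
        have := hδ hd
        rw [Real.dist_eq] at this
        exact this.le
      have : dist (Lam f φ (μ k)) 0 = |Lam f φ (μ k)| := by
        rw [Real.dist_eq, sub_zero]
      rw [this]
      linarith
    exact tendsto_nhds_unique hcont hzero
  have hfm : Measurable f := hf.measurable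
  apply MeasureTheory.ext_of_forall_lintegral_eq_of_IsFiniteMeasure
  intro f'
  rw [MeasureTheory.lintegral_map f'.measurable_coe_ennreal_comp
    hfm]
  have lip : LipschitzWith 1 ((↑) : ℝ≥0 → ℝ) := isometry_subtype_coe.lipschitz
  set φ : K →ᵇ ℝ := BoundedContinuousFunction.comp _ lip f' with hφdef
  have hmain := main φ
  have hint : ∫ x, ((f' (f x) : ℝ)) ∂(μstar : Measure K)
      = ∫ x, ((f' x : ℝ)) ∂(μstar : Measure K) := by
    have h := sub_eq_zero.mp hmain
    simpa [Lam, hφdef] using h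
  have h1 : (∫⁻ x, (f' (f x) : ℝ≥0∞) ∂(μstar : Measure K)).toReal
      = ∫ x, ((f' (f x) : ℝ)) ∂(μstar : Measure K) :=
    BoundedContinuousFunction.toReal_lintegral_coe_eq_integral
      (f'.compContinuous ⟨f, hf⟩) _
  have h2 := BoundedContinuousFunction.toReal_lintegral_coe_eq_integral f' (μstar : Measure K)
  have hne1 : (∫⁻ x, (f' (f x) : ℝ≥0∞) ∂(μstar : Measure K)) ≠ ∞ :=
    (BoundedContinuousFunction.lintegral_lt_top_of_nnreal _ (f'.compContinuous ⟨f, hf⟩)).ne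
  have hne2 : (∫⁻ x, (f' x : ℝ≥0∞) ∂(μstar : Measure K)) ≠ ∞ :=
    (BoundedContinuousFunction.lintegral_lt_top_of_nnreal _ f').ne
  exact (ENNReal.toReal_eq_toReal_iff' hne1 hne2).mp (by rw [h1, h2]; exact hint)
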